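/- Let n be a squarefree positive integer and ζ_n a primitive n-th root of unity in ℂ. Then the set {ζ_n^k : 1 ≤ k ≤ n, gcd(k,n) = 1} of all primitive n-th roots of unity is linearly independent over ℚ. -/

import Mathlib

open Polynomial Finset

/-- The sum of the primitive `e`-th roots of unity in a domain containing a primitive
`e`-th root of unity equals the Möbius function `μ e`. -/
lemma sum_primRoots_eq_ArithmeticFunction.moebius {K : Type*} [CommRing K] [IsDomain K] :
    ∀ e : ℕ, 0 < e → ∀ θ : K, IsPrimitiveRoot θ e →
      (∑ x ∈ primitiveRoots e K, x) = ((ArithmeticFunction.moebius e : ℤ) : K) := by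
  intro e
  induction e using Nat.strong_induction_on with
  | _ e IH =>
  intro he θ hθ
  classical
  by_cases h1 : e = 1
  · subst h1; simp [IsPrimitiveRoot.primitiveRoots_one]
  · have he1 : 1 < e := by omega
    haveI : NeZero e := ⟨he.ne'⟩
    have himg : nthRootsFinset e (1 : K) = Finset.image (θ ^ ·) (Finset.range e) := by
      ext x
      rw [Polynomial.mem_nthRootsFinset he, Finset.mem_image]
      constructor
      · intro hx
        obtain ⟨i, hi, hix⟩ := hθ.eq_pow_of_pow_eq_one hx
        exact ⟨i, Finset.mem_range.2 hi, hix⟩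
      · rintro ⟨i, -, rfl⟩
        rw [← pow_mul, mul_comm, pow_mul, hθ.pow_eq_one, one_pow]
    have htot : ∑ x ∈ nthRootsFinset e (1 : K), x = 0 := by
      rw [himg, Finset.sum_image (fun i hi j hj hij =>
        hθ.pow_inj (mem_range.1 hi) (mem_range.1 hj) hij)]
      exact hθ.geom_sum_eq_zero he1
    have h0 : ∑ d ∈ e.divisors, ∑ x ∈ primitiveRoots d K, x = 0 := by
      rw [← Finset.sum_biUnion ?hd, ← IsPrimitiveRoot.nthRoots_one_eq_biUnion_primitiveRoots, htot]
      case hd => intro i _ j _ hij; exact IsPrimitiveRoot.disjoint hij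
    have hIH : ∀ d ∈ e.properDivisors,
        ∑ x ∈ primitiveRoots d K, x = ((ArithmeticFunction.moebius d : ℤ) : K) := by
      intro d hd
      obtain ⟨hdvd, hlt⟩ := Nat.mem_properDivisors.1 hd
      have hd0 : 0 < d := Nat.pos_of_dvd_of_pos hdvd he
      exact IH d hlt hd0 (θ ^ (e / d)) (hθ.pow he (Nat.div_mul_cancel hdvd).symm)
    have hmu : (∑ d ∈ e.divisors, (ArithmeticFunction.moebius d : ℤ)) = 0 := by
      have h := congrArg (fun f : ArithmeticFunction ℤ => f e)
        ArithmeticFunction.moebius_mul_coe_zeta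
      simp only [ArithmeticFunction.coe_mul_zeta_apply, ArithmeticFunction.one_apply] at h
      rw [if_neg h1] at h
      exact h
    rw [← Nat.cons_self_properDivisors he.ne', Finset.sum_cons] at h0 hmu
    rw [Finset.sum_congr rfl hIH] at h0
    have hmuK : ((ArithmeticFunction.moebius e : ℤ) : K) + ∑ d ∈ e.properDivisors, ((ArithmeticFunction.moebius d : ℤ) : K) = 0 := by
      have := congrArg (fun z : ℤ => (z : K)) hmu
      push_cast at this
      exact_mod_cast this
    linear_combination h0 - hmuK

set_option maxHeartbeats 1000000 in
/-- For squarefree `n`, the primitive `n`-th roots of unity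
`{ζₙ^k : 1 ≤ k ≤ n, gcd(k,n) = 1}` are linearly independent over `ℚ`. -/
theorem primitiveRoots_linearIndependent_of_squarefree (n : ℕ) (hn : 0 < n)
    (hsf : Squarefree n) :
    LinearIndependent ℚ
      (fun k : {k : ℕ // 1 ≤ k ∧ k ≤ n ∧ Nat.gcd k n = 1} =>
        Complex.exp (2 * Real.pi * Complex.I / n) ^ (k : ℕ)) := by
  haveI : NeZero n := ⟨hn.ne'⟩
  set ζ : ℂ := Complex.exp (2 * Real.pi * Complex.I / n) with hζdef
  have hζ : IsPrimitiveRoot ζ n := Complex.isPrimitiveRoot_exp n hn.ne'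
  set F : Subalgebra ℚ ℂ := Algebra.adjoin ℚ {ζ} with hFdef
  haveI hcyc : IsCyclotomicExtension {n} ℚ F :=
    hζ.adjoin_isCyclotomicExtension ℚ (n := n)
  set ζ' : F := ⟨ζ, Algebra.self_mem_adjoin_singleton ℚ ζ⟩ with hζ'def
  have hζ' : IsPrimitiveRoot ζ' n := IsPrimitiveRoot.coe_submonoidClass_iff.1 hζ
  set s : Finset ℕ := (Finset.Icc 1 n).filter (fun k => Nat.gcd k n = 1) with hsdef
  have hcard : s.card = n.totient := by
    rcases eq_or_lt_of_le (Nat.succ_le_of_lt hn) with h1 | h2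
    · subst h1; rw [hsdef]; decide
    · have hs' : s = (Finset.range n).filter (fun k => Nat.gcd k n = 1) := by
        ext k
        simp only [hsdef, mem_filter, mem_Icc, mem_range]
        constructor
        · rintro ⟨⟨h1k, hkn⟩, hg⟩
          refine ⟨lt_of_le_of_ne hkn ?_, hg⟩
          rintro rfl; rw [Nat.gcd_self] at hg; omega
        · rintro ⟨hkn, hg⟩
          refine ⟨⟨?_, hkn.le⟩, hg⟩
          rcases Nat.eq_zero_or_pos k with rfl | h
          · rw [Nat.gcd_zero_left] at hg; omega
          · exact h
      rw [hs', Nat.totient_eq_card_coprime]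
      congr 1
      ext k
      simp [Nat.Coprime, Nat.gcd_comm]
  have hfr : Module.finrank ℚ F = n.totient :=
    IsCyclotomicExtension.finrank (n := n) F (Polynomial.cyclotomic.irreducible_rat hn)
  set g : ↥s → F := (fun k => ζ' ^ (k : ℕ)) with hgdef
  have hspan : ∀ m : ℕ, 0 < m → ζ' ^ m ∈ Submodule.span ℚ (Set.range g) := by
    intro m hm
    set e := Nat.gcd m n with hedef
    have he : 0 < e := Nat.gcd_pos_of_pos_right m hn
    have hedvd : e ∣ n := Nat.gcd_dvd_right m n
    set d := n / e with hddef
    have hn_eq : n = d * e := (Nat.div_mul_cancel hedvd).symm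
    have hcop : Nat.Coprime d e := ((Nat.squarefree_mul_iff).1 (hn_eq ▸ hsf)).1
    have hθ : IsPrimitiveRoot (ζ' ^ d) e := hζ'.pow hn hn_eq
    have hordm : orderOf (ζ' ^ m) = d := by
      rw [orderOf_pow' _ hm.ne', ← hζ'.eq_orderOf, Nat.gcd_comm]
    have hmem : ∀ x ∈ primitiveRoots e F, ζ' ^ m * x ∈ Submodule.span ℚ (Set.range g) := by
      intro x hx
      have hxprim : IsPrimitiveRoot x e := (mem_primitiveRoots he).1 hx
      have hordx : orderOf x = e := hxprim.eq_orderOf.symm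
      have hord : orderOf (ζ' ^ m * x) = n := by
        rw [(Commute.all _ _).orderOf_mul_eq_mul_orderOf_of_coprime
          (by rw [hordm, hordx]; exact hcop), hordm, hordx, ← hn_eq]
      have hy : IsPrimitiveRoot (ζ' ^ m * x) n := by
        refine ⟨?_, ?_⟩
        · rw [← hord]; exact pow_orderOf_eq_one _
        · intro l hl; rw [← hord]; exact orderOf_dvd_of_pow_eq_one hl
      obtain ⟨i, hi, hix⟩ := hζ'.eq_pow_of_pow_eq_one hy.pow_eq_one
      have hicop : Nat.Coprime i n := (hζ'.pow_iff_coprime hn i).1 (hix ▸ hy)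
      rcases Nat.eq_zero_or_pos i with rfl | hipos
      · have hn1 : n = 1 := by simpa [Nat.Coprime] using hicop
        have hk : (1 : ℕ) ∈ s := by simp [hsdef, hn1]
        have hone : ζ' = 1 := IsPrimitiveRoot.one_right_iff.1 (hn1 ▸ hζ')
        have : ζ' ^ m * x = g ⟨1, hk⟩ := by
          rw [← hix, hgdef]; simp [hone]
        rw [this]; exact Submodule.subset_span ⟨_, rfl⟩
      · have hk : i ∈ s := by
          simp only [hsdef, mem_filter, mem_Icc]
          exact ⟨⟨hipos, hi.le⟩, hicop⟩
        rw [← hix]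
        exact Submodule.subset_span ⟨⟨i, hk⟩, rfl⟩
    have hμ : ((ArithmeticFunction.moebius e : ℤ) : ℚ) ≠ 0 := by
      exact_mod_cast ArithmeticFunction.moebius_ne_zero_iff_squarefree.2 (hsf.squarefree_of_dvd hedvd)
    have hsum : ζ' ^ m * ((ArithmeticFunction.moebius e : ℤ) : F) ∈ Submodule.span ℚ (Set.range g) := by
      rw [← sum_primRoots_eq_ArithmeticFunction.moebius e he (ζ' ^ d) hθ, Finset.mul_sum]
      exact Submodule.sum_mem _ hmem
    have key : ζ' ^ m = ((ArithmeticFunction.moebius e : ℤ) : ℚ)⁻¹ • (ζ' ^ m * ((ArithmeticFunction.moebius e : ℤ) : F)) := by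
      rw [Algebra.smul_def]
      have hcast : ((ArithmeticFunction.moebius e : ℤ) : F) = algebraMap ℚ F ((ArithmeticFunction.moebius e : ℤ) : ℚ) := by
        rw [map_intCast]
      rw [hcast, mul_comm (ζ' ^ m), ← mul_assoc, ← map_mul, inv_mul_cancel₀ hμ, map_one,
        one_mul]
    rw [key]
    exact Submodule.smul_mem _ _ hsum
  have htop : (⊤ : Submodule ℚ F) ≤ Submodule.span ℚ (Set.range g) := by
    let pb := IsPrimitiveRoot.powerBasis (n := n) ℚ hζ'
    rw [← pb.basis.span_eq]
    refine Submodule.span_le.2 ?_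
    rintro _ ⟨i, rfl⟩
    rw [PowerBasis.coe_basis, IsPrimitiveRoot.powerBasis_gen]
    have := hspan ((i : ℕ) + n) (by omega)
    rwa [pow_add, hζ'.pow_eq_one, mul_one] at this
  have hli : LinearIndependent ℚ g :=
    linearIndependent_of_top_le_span_of_card_eq_finrank htop
      (by rw [Fintype.card_coe, hcard, hfr])
  have hli2 : LinearIndependent ℚ (fun k : ↥s => ζ ^ (k : ℕ)) := by
    have h := hli.map' F.val.toLinearMap
      (LinearMap.ker_eq_bot.2 Subtype.val_injective)
    have hfun : (⇑F.val.toLinearMap ∘ g) = fun k : ↥s => ζ ^ (k : ℕ) := by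
      funext k
      show F.val (ζ' ^ (k : ℕ)) = ζ ^ (k : ℕ)
      rw [map_pow]
      rfl
    rwa [hfun] at h
  have hphi : ∀ k : {k : ℕ // 1 ≤ k ∧ k ≤ n ∧ Nat.gcd k n = 1}, k.1 ∈ s := by
    rintro ⟨k, h1, h2, h3⟩
    simp only [hsdef, Finset.mem_filter, Finset.mem_Icc]
    exact ⟨⟨h1, h2⟩, h3⟩
  let φ : {k : ℕ // 1 ≤ k ∧ k ≤ n ∧ Nat.gcd k n = 1} → ↥s := fun k => ⟨k.1, hphi k⟩
  have hinj : Function.Injective φ := by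
    intro a b hab
    have h2 : (φ a).1 = (φ b).1 := congrArg Subtype.val hab
    exact Subtype.ext h2
  exact hli2.comp φ hinj
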